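/- Stone's monotonicity of sphere entropies: define for n ≥ 1 the real number a(n) = (n/(2πe))^{n/2} · 2 π^{(n+1)/2} / Γ((n+1)/2), which is the entropy λ(Sⁿ) of the round shrinking n-sphere. Then the sequence a is strictly decreasing, i.e. a(n+1) < a(n) for all n ≥ 1, and a(n) > 1 for all n ≥ 1; in particular √(2π/e) = a(1) > a(2) = 4/e > a(3) > ⋯ > 1. -/

import Mathlib

open Real

/-- The entropy `λ(Sⁿ)` of the round shrinking `n`-sphere, in closed form:
`a n = (n/(2πe))^{n/2} · 2 π^{(n+1)/2} / Γ((n+1)/2)`. -/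
noncomputable def sphereEntropy (n : ℕ) : ℝ :=
  ((n : ℝ) / (2 * π * Real.exp 1)) ^ ((n : ℝ) / 2) *
    (2 * π ^ (((n : ℝ) + 1) / 2)) / Real.Gamma (((n : ℝ) + 1) / 2)

section StoneAux

open Filter

lemma phi_key {t : ℝ} (ht : 0 < t) :
    (1 + t) * Real.log (1 + t) < t + t * Real.log (1 + t / 2) := by
  set φ : ℝ → ℝ := fun s => s + s * Real.log (1 + s / 2) - (1 + s) * Real.log (1 + s) with hφ
  have hderiv : ∀ s : ℝ, 0 ≤ s → HasDerivAt φ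
      (Real.log (1 + s / 2) + s / (2 + s) - Real.log (1 + s)) s := by
    intro s hs
    have h1 : (0:ℝ) < 1 + s / 2 := by linarith
    have h2 : (0:ℝ) < 1 + s := by linarith
    have d1 : HasDerivAt (fun x : ℝ => 1 + x / 2) (1/2) s := by
      simpa using ((hasDerivAt_id s).div_const 2).const_add 1
    have d2 : HasDerivAt (fun x : ℝ => Real.log (1 + x / 2)) ((1/2) / (1 + s/2)) s :=
      by simpa [Function.comp_def, div_eq_inv_mul] using (Real.hasDerivAt_log h1.ne').comp s d1
    have d3 : HasDerivAt (fun x : ℝ => x * Real.log (1 + x / 2))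
        (Real.log (1 + s / 2) + s * ((1/2) / (1 + s/2))) s := by
      exact ((hasDerivAt_id s).mul d2).congr_deriv (by simp)
    have d4 : HasDerivAt (fun x : ℝ => 1 + x) 1 s := by
      simpa using (hasDerivAt_id s).const_add 1
    have d5 : HasDerivAt (fun x : ℝ => Real.log (1 + x)) (1 / (1 + s)) s := by
      simpa [Function.comp_def, div_eq_inv_mul] using (Real.hasDerivAt_log h2.ne').comp s d4
    have d6 : HasDerivAt (fun x : ℝ => (1 + x) * Real.log (1 + x))
        (1 * Real.log (1 + s) + (1 + s) * (1 / (1 + s))) s := d4.mul d5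
    have := ((hasDerivAt_id s).add d3).sub d6
    refine this.congr_deriv ?_
    field_simp
    ring
  have hmono : StrictMonoOn φ (Set.Ici 0) := by
    apply strictMonoOn_of_deriv_pos (convex_Ici 0)
    · intro s hs
      exact ((hderiv s hs).continuousAt).continuousWithinAt
    · intro s hs
      rw [interior_Ici] at hs
      have hs : (0:ℝ) < s := hs
      rw [(hderiv s hs.le).deriv]
      have h1 : (0:ℝ) < 1 + s / 2 := by linarith
      have h2 : (0:ℝ) < 1 + s := by linarith
      have hx : (0:ℝ) < (1 + s) / (1 + s / 2) := by positivity
      have hlt : Real.log ((1 + s) / (1 + s / 2)) < (1 + s) / (1 + s / 2) - 1 := by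
        apply Real.log_lt_sub_one_of_pos hx
        intro h
        rw [div_eq_one_iff_eq h1.ne'] at h
        linarith
      rw [Real.log_div h2.ne' h1.ne'] at hlt
      have : (1 + s) / (1 + s / 2) - 1 = s / (2 + s) := by
        field_simp
        ring
      rw [this] at hlt
      linarith
  have h0 : φ 0 = 0 := by simp [hφ]
  have := hmono (Set.self_mem_Ici) (Set.mem_Ici.2 ht.le) ht
  rw [h0] at this
  simp only [hφ] at this
  linarith

lemma wendel_sq {y : ℝ} (hy : 0 < y) :
    Real.Gamma (y + 1/2) ^ 2 ≤ Real.Gamma y * Real.Gamma (y + 1) := by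
  have hy1 : (0:ℝ) < y + 1 := by linarith
  have h := Real.convexOn_log_Gamma.2 (Set.mem_Ioi.2 hy) (Set.mem_Ioi.2 hy1)
      (by norm_num : (0:ℝ) ≤ (1/2:ℝ)) (by norm_num : (0:ℝ) ≤ (1/2:ℝ)) (by norm_num)
  simp only [smul_eq_mul, Function.comp_apply] at h
  have harg : (1/2:ℝ) * y + (1/2:ℝ) * (y + 1) = y + 1/2 := by ring
  rw [harg] at h
  have hg : (0:ℝ) < Real.Gamma (y + 1/2) := Real.Gamma_pos_of_pos (by linarith)
  have hgy : (0:ℝ) < Real.Gamma y := Real.Gamma_pos_of_pos hy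
  have hgy1 : (0:ℝ) < Real.Gamma (y + 1) := Real.Gamma_pos_of_pos hy1
  have : Real.log (Real.Gamma (y + 1/2) ^ 2) ≤ Real.log (Real.Gamma y * Real.Gamma (y + 1)) := by
    rw [Real.log_pow, Real.log_mul hgy.ne' hgy1.ne']
    push_cast
    linarith
  exact (Real.log_le_log_iff (by positivity) (by positivity)).1 this


lemma tendsto_shift_ratio (c a : ℝ) (hc : 0 < c) :
    Filter.Tendsto (fun k : ℕ => (c + k + a) / (c + k + 1/4)) Filter.atTop (nhds 1) := by
  have hd : Filter.Tendsto (fun k : ℕ => c + (k:ℝ) + 1/4) Filter.atTop Filter.atTop := by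
    apply Filter.tendsto_atTop_add_const_right
    exact Filter.tendsto_atTop_add_const_left _ _ tendsto_natCast_atTop_atTop
  have hinv : Filter.Tendsto (fun k : ℕ => (c + (k:ℝ) + 1/4)⁻¹) Filter.atTop (nhds 0) :=
    hd.inv_tendsto_atTop
  have heq : ∀ k : ℕ, (c + k + a) / (c + k + 1/4) = 1 + (a - 1/4) * (c + (k:ℝ) + 1/4)⁻¹ := by
    intro k
    have hk : (0:ℝ) < c + k + 1/4 := by positivity
    field_simp
    ring
  simp only [heq]
  have := (hinv.const_mul (a - 1/4)).const_add 1
  simpa using this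

noncomputable def Qf (x : ℝ) : ℝ :=
  Real.Gamma (x + 1) ^ 2 / ((x + 1/4) * Real.Gamma (x + 1/2) ^ 2)

lemma Qf_lower {x : ℝ} (hx : 0 < x) : x / (x + 1/4) ≤ Qf x := by
  have hg : (0:ℝ) < Real.Gamma (x + 1/2) := Real.Gamma_pos_of_pos (by linarith)
  have key : x * Real.Gamma (x + 1/2) ^ 2 ≤ Real.Gamma (x + 1) ^ 2 := by
    have h := wendel_sq hx
    have hG : Real.Gamma (x + 1) = x * Real.Gamma x := Real.Gamma_add_one hx.ne'
    have hgx : (0:ℝ) < Real.Gamma x := Real.Gamma_pos_of_pos hx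
    calc x * Real.Gamma (x + 1/2) ^ 2 ≤ x * (Real.Gamma x * Real.Gamma (x + 1)) := by
          nlinarith
      _ = Real.Gamma (x + 1) ^ 2 := by rw [hG]; ring
  rw [Qf, div_le_div_iff₀ (by linarith) (by positivity)]
  nlinarith

lemma Qf_upper {x : ℝ} (hx : 0 < x) : Qf x ≤ (x + 1/2) / (x + 1/4) := by
  have hg : (0:ℝ) < Real.Gamma (x + 1/2) := Real.Gamma_pos_of_pos (by linarith)
  have key : Real.Gamma (x + 1) ^ 2 ≤ (x + 1/2) * Real.Gamma (x + 1/2) ^ 2 := by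
    have h := wendel_sq (by linarith : (0:ℝ) < x + 1/2)
    have e1 : x + 1/2 + 1/2 = x + 1 := by ring
    have e2 : Real.Gamma (x + 1/2 + 1) = (x + 1/2) * Real.Gamma (x + 1/2) :=
      Real.Gamma_add_one (by positivity)
    rw [e1, e2] at h
    nlinarith
  rw [Qf, div_le_div_iff₀ (by positivity) (by linarith)]
  nlinarith

lemma Qf_step {x : ℝ} (hx : 0 < x) : Qf (x + 1) < Qf x := by
  have hg12 : (0:ℝ) < Real.Gamma (x + 1/2) := Real.Gamma_pos_of_pos (by linarith)
  have hg1 : (0:ℝ) < Real.Gamma (x + 1) := Real.Gamma_pos_of_pos (by linarith)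
  have e1 : Real.Gamma (x + 1 + 1) = (x + 1) * Real.Gamma (x + 1) := by
    rw [Real.Gamma_add_one (by positivity)]
  have e2 : Real.Gamma (x + 1 + 1/2) = (x + 1/2) * Real.Gamma (x + 1/2) := by
    have : x + 1 + 1/2 = (x + 1/2) + 1 := by ring
    rw [this, Real.Gamma_add_one (by positivity)]
  rw [Qf, Qf, e1, e2, div_lt_div_iff₀ (by positivity) (by positivity)]
  have hpoly : (x + 1)^2 * (x + 1/4) < (x + 1/2)^2 * (x + 1 + 1/4) := by nlinarith
  calc ((x+1) * Real.Gamma (x+1))^2 * ((x + 1/4) * Real.Gamma (x + 1/2)^2)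
      = ((x+1)^2 * (x+1/4)) * (Real.Gamma (x+1)^2 * Real.Gamma (x+1/2)^2) := by ring
    _ < ((x + 1/2)^2 * (x + 1 + 1/4)) * (Real.Gamma (x+1)^2 * Real.Gamma (x+1/2)^2) := by
        apply mul_lt_mul_of_pos_right hpoly (by positivity)
    _ = Real.Gamma (x+1)^2 * ((x + 1 + 1/4) * ((x + 1/2) * Real.Gamma (x + 1/2))^2) := by ring

lemma Qf_gt_one {x : ℝ} (hx : 0 < x) : 1 < Qf x := by
  have step : ∀ y : ℝ, 0 < y → Qf (y + 1) < Qf y := fun y hy => Qf_step hy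
  -- the sequence k ↦ Qf (x + 1 + k) is antitone and tends to 1
  set f : ℕ → ℝ := fun k => Qf (x + 1 + k) with hf
  have hanti : Antitone f := by
    apply antitone_nat_of_succ_le
    intro k
    have : Qf ((x + 1 + k) + 1) < Qf (x + 1 + k) := Qf_step (by positivity)
    simp only [hf]
    push_cast
    calc Qf (x + 1 + (k+1)) = Qf ((x + 1 + k) + 1) := by ring_nf
      _ ≤ Qf (x + 1 + k) := this.le
  have hlim : Tendsto f atTop (nhds 1) := by
    have hlow : Tendsto (fun k : ℕ => (x + 1 + k) / (x + 1 + k + 1/4)) atTop (nhds 1) := by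
      simpa using tendsto_shift_ratio (x+1) 0 (by positivity)
    have hupp : Tendsto (fun k : ℕ => (x + 1 + k + 1/2) / (x + 1 + k + 1/4)) atTop (nhds 1) :=
      tendsto_shift_ratio (x+1) (1/2) (by positivity)
    apply tendsto_of_tendsto_of_tendsto_of_le_of_le hlow hupp
    · intro k; exact Qf_lower (by positivity)
    · intro k; exact Qf_upper (by positivity)
  have h1 : 1 ≤ f 0 := hanti.le_of_tendsto hlim 0
  have : Qf (x + 1) < Qf x := Qf_step hx
  have hf0 : f 0 = Qf (x + 1) := by simp [hf]
  rw [hf0] at h1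
  linarith

lemma kershaw_log {x : ℝ} (hx : 0 < x) :
    Real.log (x + 1/4) + 2 * Real.log (Real.Gamma (x + 1/2)) <
      2 * Real.log (Real.Gamma (x + 1)) := by
  have h := Qf_gt_one hx
  rw [Qf] at h
  have hg12 := Real.Gamma_pos_of_pos (show (0:ℝ) < x + 1/2 by linarith)
  have hg1 := Real.Gamma_pos_of_pos (show (0:ℝ) < x + 1 by linarith)
  have hkey : (x + 1/4) * Real.Gamma (x + 1/2) ^ 2 < Real.Gamma (x + 1) ^ 2 := by
    rw [lt_div_iff₀ (by positivity)] at h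
    linarith
  have hlog := Real.log_lt_log (by positivity) hkey
  rw [Real.log_mul (by positivity) (by positivity), Real.log_pow, Real.log_pow] at hlog
  push_cast at hlog
  linarith

lemma elog {N : ℝ} (hN : 1 ≤ N) :
    (N + 1) * Real.log (N + 1) <
      N * Real.log N + 1 + Real.log (2 * N + 1) - Real.log 2 := by
  have hN0 : (0:ℝ) < N := by linarith
  have h := phi_key (show (0:ℝ) < 1/N by positivity)
  have e1 : (1:ℝ) + 1/N = (N+1)/N := by field_simp
  have e2 : (1:ℝ) + (1/N)/2 = (2*N+1)/(2*N) := by field_simp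
  rw [e1, e2, Real.log_div (by positivity) hN0.ne',
    Real.log_div (by positivity) (by positivity),
    Real.log_mul two_ne_zero hN0.ne'] at h
  set a := Real.log (N+1) - Real.log N with ha
  set b := Real.log (2*N+1) - (Real.log 2 + Real.log N) with hb
  have h2 : (N+1) * a < 1 + b := by
    have h3 := mul_lt_mul_of_pos_left h hN0
    calc (N+1) * a = N * ((N+1)/N * a) := by first | (field_simp; ring) | field_simp
      _ < N * (1/N + 1/N * b) := h3
      _ = 1 + b := by first | (field_simp; ring) | field_simp
  rw [ha, hb] at h2
  nlinarith [Real.log_le_sub_one_of_pos hN0]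

end StoneAux

section StoneAux2

open Filter

lemma sphereEntropy_pos {n : ℕ} (hn : 1 ≤ n) : 0 < sphereEntropy n := by
  have hN : (1:ℝ) ≤ (n:ℝ) := by exact_mod_cast hn
  have hπ := Real.pi_pos
  have hΓ : 0 < Real.Gamma (((n:ℝ) + 1) / 2) := Real.Gamma_pos_of_pos (by linarith)
  have hbase : 0 < (n:ℝ) / (2 * π * Real.exp 1) := by positivity
  rw [sphereEntropy]
  positivity

lemma log_sphereEntropy {n : ℕ} (hn : 1 ≤ n) :
    Real.log (sphereEntropy n) =
      ((n:ℝ)/2) * (Real.log n - (Real.log 2 + Real.log π + 1)) + Real.log 2 +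
        (((n:ℝ)+1)/2) * Real.log π - Real.log (Real.Gamma (((n:ℝ)+1)/2)) := by
  have hN : (1:ℝ) ≤ (n:ℝ) := by exact_mod_cast hn
  have hN0 : (0:ℝ) < (n:ℝ) := by linarith
  have hπ := Real.pi_pos
  have hΓ : 0 < Real.Gamma (((n:ℝ) + 1) / 2) := Real.Gamma_pos_of_pos (by linarith)
  have hbase : 0 < (n:ℝ) / (2 * π * Real.exp 1) := by positivity
  have hpow : (0:ℝ) < ((n:ℝ) / (2 * π * Real.exp 1)) ^ ((n:ℝ)/2) := Real.rpow_pos_of_pos hbase _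
  have hpow2 : (0:ℝ) < π ^ (((n:ℝ)+1)/2) := Real.rpow_pos_of_pos hπ _
  rw [sphereEntropy, Real.log_div (by positivity) hΓ.ne',
    Real.log_mul hpow.ne' (by positivity), Real.log_mul two_ne_zero hpow2.ne',
    Real.log_rpow hbase, Real.log_rpow hπ,
    Real.log_div hN0.ne' (by positivity),
    Real.log_mul (by positivity) (Real.exp_pos 1).ne',
    Real.log_mul two_ne_zero hπ.ne', Real.log_exp]
  ring

lemma sphereEntropy_strict_anti {n : ℕ} (hn : 1 ≤ n) :
    sphereEntropy (n + 1) < sphereEntropy n := by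
  have hN : (1:ℝ) ≤ (n:ℝ) := by exact_mod_cast hn
  have hN0 : (0:ℝ) < (n:ℝ) := by linarith
  have hπ := Real.pi_pos
  set N := (n:ℝ) with hNdef
  rw [← Real.log_lt_log_iff (sphereEntropy_pos (by omega)) (sphereEntropy_pos hn),
    log_sphereEntropy hn, log_sphereEntropy (by omega : 1 ≤ n+1)]
  push_cast
  -- Gamma arguments
  have e1 : (N + 1 + 1) / 2 = N/2 + 1 := by ring
  have e2 : (N + 1) / 2 = N/2 + 1/2 := by ring
  rw [e1, e2]
  have hker := kershaw_log (show (0:ℝ) < N/2 by positivity)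
  have helog := elog hN
  -- connect log (N/2 + 1/4) with log (2N+1) - log 4
  have e3 : N/2 + 1/4 = (2*N+1)/4 := by ring
  have e4 : Real.log (N/2 + 1/4) = Real.log (2*N+1) - 2 * Real.log 2 := by
    rw [e3, Real.log_div (by positivity) (by norm_num), show (4:ℝ) = 2^2 by norm_num,
      Real.log_pow]
    push_cast; ring
  rw [e4] at hker
  linarith

lemma log_factorial_le {n : ℕ} (hn : 1 ≤ n) :
    Real.log (Nat.factorial n) ≤ 1 + (1/2) * Real.log n + n * Real.log n - n := by
  obtain ⟨m, rfl⟩ : ∃ m, n = m + 1 := ⟨n - 1, by omega⟩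
  have hN0 : (0:ℝ) < ((m+1 : ℕ):ℝ) := by positivity
  have hs : Stirling.stirlingSeq (m+1) ≤ Real.exp 1 / Real.sqrt 2 := by
    have := Stirling.stirlingSeq'_antitone (Nat.zero_le m)
    simpa [Stirling.stirlingSeq_one] using this
  have hD : (0:ℝ) < Real.sqrt (2*(m+1:ℕ)) * (((m+1:ℕ):ℝ) / Real.exp 1) ^ (m+1) := by
    positivity
  have hfact : ((Nat.factorial (m+1)) : ℝ) ≤ (Real.exp 1 / Real.sqrt 2) *
      (Real.sqrt (2*(m+1:ℕ)) * (((m+1:ℕ):ℝ) / Real.exp 1) ^ (m+1)) := by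
    have hdef : Stirling.stirlingSeq (m+1)
        = ((Nat.factorial (m+1)) : ℝ) /
          (Real.sqrt (2*(m+1:ℕ)) * (((m+1:ℕ):ℝ) / Real.exp 1) ^ (m+1)) := by
      rw [Stirling.stirlingSeq]
    rw [hdef, div_le_iff₀ hD] at hs
    linarith [hs]
  have hlog := Real.log_le_log (by positivity) hfact
  have l1 : Real.log (Real.exp 1 / Real.sqrt 2) = 1 - Real.log 2 / 2 := by
    rw [Real.log_div (Real.exp_pos 1).ne' (by positivity), Real.log_exp,
      Real.log_sqrt (by norm_num)]
  have l2 : Real.log (Real.sqrt (2*(m+1:ℕ))) = (Real.log 2 + Real.log ((m+1:ℕ):ℝ)) / 2 := by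
    rw [Real.log_sqrt (by positivity), Real.log_mul two_ne_zero (by positivity)]
  have l3 : Real.log ((((m+1:ℕ):ℝ) / Real.exp 1) ^ (m+1))
      = ((m+1:ℕ):ℝ) * (Real.log ((m+1:ℕ):ℝ) - 1) := by
    rw [Real.log_pow, Real.log_div (by positivity) (Real.exp_pos 1).ne', Real.log_exp]
  rw [Real.log_mul (by positivity) hD.ne', Real.log_mul (by positivity) (by positivity),
    l1, l2, l3] at hlog
  push_cast at hlog ⊢
  linarith

lemma three_log_two_add_log_pi : (3:ℝ) ≤ 3 * Real.log 2 + Real.log π := by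
  have hπ := Real.pi_gt_d6
  have he : Real.exp 1 < 2.7182818286 := Real.exp_one_lt_d9
  have h3 : Real.exp 3 < 8 * π := by
    have h0 : Real.exp 3 = (Real.exp 1)^3 := by
      rw [← Real.exp_nat_mul]; norm_num
    rw [h0]
    have h1 : (Real.exp 1)^3 < 2.7182818286^3 :=
      pow_lt_pow_left₀ he (Real.exp_pos 1).le (by norm_num)
    nlinarith
  have := Real.log_le_log (Real.exp_pos 3) h3.le
  rw [Real.log_exp, Real.log_mul (by norm_num) (by positivity),
    show (8:ℝ) = 2^3 by norm_num, Real.log_pow] at this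
  push_cast at this
  linarith

lemma prod_gt_one {n : ℕ} (hn : 1 ≤ n) : 1 < sphereEntropy n * sphereEntropy (n+1) := by
  have hN : (1:ℝ) ≤ (n:ℝ) := by exact_mod_cast hn
  have hN0 : (0:ℝ) < (n:ℝ) := by linarith
  have hπ := Real.pi_pos
  have hpos : 0 < sphereEntropy n * sphereEntropy (n+1) :=
    mul_pos (sphereEntropy_pos hn) (sphereEntropy_pos (by omega))
  rw [show (1:ℝ) = Real.exp 0 by simp, ← Real.exp_log hpos]
  apply Real.exp_lt_exp.2
  rw [Real.log_mul (sphereEntropy_pos hn).ne' (sphereEntropy_pos (by omega)).ne',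
    log_sphereEntropy hn, log_sphereEntropy (by omega : 1 ≤ n+1)]
  push_cast
  have hdup := Real.Gamma_mul_Gamma_add_half (((n:ℝ)+1)/2)
  rw [show 2*(((n:ℝ)+1)/2) = (n:ℝ)+1 by ring] at hdup
  have e1 : ((n:ℝ) + 1 + 1) / 2 = ((n:ℝ)+1)/2 + 1/2 := by ring
  rw [e1]
  have hΓ1 : 0 < Real.Gamma (((n:ℝ)+1)/2) := Real.Gamma_pos_of_pos (by linarith)
  have hΓ2 : 0 < Real.Gamma (((n:ℝ)+1)/2 + 1/2) := Real.Gamma_pos_of_pos (by linarith)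
  have hΓn : 0 < Real.Gamma ((n:ℝ)+1) := Real.Gamma_pos_of_pos (by linarith)
  have hlogdup : Real.log (Real.Gamma (((n:ℝ)+1)/2)) + Real.log (Real.Gamma (((n:ℝ)+1)/2 + 1/2))
      = Real.log (Real.Gamma ((n:ℝ)+1)) + (1 - ((n:ℝ)+1)) * Real.log 2
        + (1/2) * Real.log π := by
    rw [← Real.log_mul hΓ1.ne' hΓ2.ne', hdup,
      Real.log_mul (by positivity) (Real.sqrt_pos.2 hπ).ne',
      Real.log_mul hΓn.ne' (by positivity : ((2:ℝ) ^ (1 - ((n:ℝ)+1)) : ℝ) ≠ 0),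
      Real.log_rpow (by norm_num), Real.log_sqrt hπ.le]
    ring
  have hΓfact : Real.Gamma ((n:ℝ)+1) = ((Nat.factorial n) : ℝ) := by
    exact_mod_cast Real.Gamma_nat_eq_factorial n
  have hfactlog : Real.log (Real.Gamma ((n:ℝ)+1))
      ≤ 1 + (1/2) * Real.log n + n * Real.log n - n := by
    rw [hΓfact]
    exact log_factorial_le hn
  have hlog2pi := three_log_two_add_log_pi
  have hloglt : Real.log (n:ℝ) < Real.log ((n:ℝ)+1) := Real.log_lt_log hN0 (by linarith)
  have hkey : 0 ≤ (((n:ℝ)+1)/2) * (Real.log ((n:ℝ)+1) - Real.log (n:ℝ)) :=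
    mul_nonneg (by linarith) (by linarith)
  nlinarith [hlogdup, hfactlog, hkey, hlog2pi, hloglt]

lemma sphereEntropy_one : sphereEntropy 1 = Real.sqrt (2 * π / Real.exp 1) := by
  have hπ := Real.pi_pos
  have he := Real.exp_pos 1
  rw [sphereEntropy]
  norm_num
  rw [← Real.sqrt_eq_rpow]
  rw [show 2 * π / Real.exp 1 = ((Real.exp 1)⁻¹ * (π⁻¹ * (1/2))) * (2*π)^2 by
    field_simp]
  conv_rhs => rw [Real.sqrt_mul (by positivity), Real.sqrt_sq (by positivity)]

lemma sphereEntropy_two : sphereEntropy 2 = 4 / Real.exp 1 := by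
  have hπ := Real.pi_pos
  have he := Real.exp_pos 1
  rw [sphereEntropy]
  norm_num
  have e2 : Real.Gamma ((3:ℝ)/2) = Real.sqrt π / 2 := by
    rw [show ((3:ℝ)/2) = 1/2 + 1 by norm_num, Real.Gamma_add_one (by norm_num),
      Real.Gamma_one_half_eq]
    ring
  rw [e2]
  have e3 : (π:ℝ) ^ ((3:ℝ)/2) = π * Real.sqrt π := by
    rw [show ((3:ℝ)/2) = 1 + 1/2 by norm_num, Real.rpow_add hπ, Real.rpow_one,
      ← Real.sqrt_eq_rpow]
  rw [e3]
  have hsπ : (0:ℝ) < Real.sqrt π := Real.sqrt_pos.2 hπ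
  field_simp
  ring

end StoneAux2

/-- Stone's monotonicity: the sphere entropies are strictly decreasing in the dimension and
bounded below by `1`; in particular `√(2π/e) = λ(S¹) > λ(S²) = 4/e > λ(S³) > ⋯ > 1`. -/
theorem sphereEntropy_strictAnti_and_gt_one :
    (∀ n : ℕ, 1 ≤ n → sphereEntropy (n + 1) < sphereEntropy n) ∧
    (∀ n : ℕ, 1 ≤ n → 1 < sphereEntropy n) ∧
    sphereEntropy 1 = Real.sqrt (2 * π / Real.exp 1) ∧
    sphereEntropy 2 = 4 / Real.exp 1 := by
  refine ⟨fun n hn => sphereEntropy_strict_anti hn, fun n hn => ?_,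
    sphereEntropy_one, sphereEntropy_two⟩
  have h1 := sphereEntropy_strict_anti hn
  have h2 := prod_gt_one hn
  have h3 := sphereEntropy_pos hn
  nlinarith
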